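/- Strictness of the inclusion of the regular semantics in the declarative semantics (incompleteness example): consider the signature with one constant z, one unary function symbol s and one unary predicate symbol p, and the logic program with coclauses (P,coP) where P = { p(X) :- p(s(X)) } and coP consists of the single cofact p(X). The ground terms are exactly the finite terms s^n(z) for n ∈ ℕ and the unique infinite term s^ω = s(s(s(...))). Then FlexCo(P,coP) = { p(t) | t a ground term } (all of coHB), while FlexReg(P,coP) = { p(s^ω) }; in particular FlexReg(P,coP) is a proper subset of FlexCo(P,coP). -/

import Mathlib

/- Framework: flexible coinductive logic programming (logic programs with coclauses).
   Terms are possibly infinite trees, modelled as M-types of a polynomial functor. -/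

namespace FlexLP

/-- A first-order signature: function symbols and predicate symbols, each with an arity.
Variables are represented by natural numbers (a countably infinite set). -/
structure Sig where
  Func : Type
  far : Func → ℕ
  Pred : Type
  par : Pred → ℕ

/-- Polynomial functor whose M-type is the type of possibly infinite terms:
nodes are labelled by function symbols (with `far` children) or variables (no children). -/
def TermP (S : Sig) : PFunctor :=
  ⟨S.Func ⊕ ℕ, fun l => Fin (match l with | Sum.inl f => S.far f | Sum.inr _ => 0)⟩

/-- Possibly infinite terms over the signature `S`. -/
def Term (S : Sig) : Type := (TermP S).M

/-- The term consisting of a single variable `x`. -/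
def Term.var (S : Sig) (x : ℕ) : Term S :=
  PFunctor.M.mk ⟨Sum.inr x, fun i => i.elim0⟩

/-- The variable `x` occurs in the term `t`. -/
inductive Term.Occurs (S : Sig) (x : ℕ) : Term S → Prop
  | root (t : Term S) (h : (PFunctor.M.dest t).1 = Sum.inr x) : Term.Occurs S x t
  | child (t : Term S) (i : (TermP S).B (PFunctor.M.dest t).1)
      (h : Term.Occurs S x ((PFunctor.M.dest t).2 i)) : Term.Occurs S x t

/-- The term `t` is finite (syntactic): all its branches are finite. -/
inductive Term.IsFinite (S : Sig) : Term S → Prop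
  | mk (t : Term S) (h : ∀ i, Term.IsFinite S ((PFunctor.M.dest t).2 i)) : Term.IsFinite S t

/-- The term `t` is ground: no variable occurs in it. -/
def Term.Ground (S : Sig) (t : Term S) : Prop := ∀ x, ¬ Term.Occurs S x t

/-- A substitution: a map from a finite set of variables to terms. -/
structure Subst (S : Sig) where
  toFun : ℕ → Option (Term S)
  finDom : {x | (toFun x).isSome}.Finite

/-- Domain of a substitution. -/
def Subst.dom {S : Sig} (σ : Subst S) : Set ℕ := {x | (σ.toFun x).isSome}

/-- A substitution is ground if all its values are ground terms. -/
def Subst.Ground {S : Sig} (σ : Subst S) : Prop :=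
  ∀ x t, σ.toFun x = some t → Term.Ground S t

/-- `σ ⊑ θ` : `dom σ ⊆ dom θ` and the two substitutions agree on `dom σ`. -/
def Subst.le {S : Sig} (σ θ : Subst S) : Prop :=
  ∀ x t, σ.toFun x = some t → θ.toFun x = some t

/-- One step of (simultaneous) substitution application, as a coalgebra.
The boolean flag records whether we are still in the original term (`true`)
or inside a substituted term (`false`). -/
def substStep (S : Sig) (σ : Subst S) : Term S × Bool → (TermP S).Obj (Term S × Bool) :=
  fun p =>
    match PFunctor.M.dest p.1, p.2 with
    | ⟨Sum.inl f, ch⟩, b => ⟨Sum.inl f, fun i => (ch i, b)⟩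
    | ⟨Sum.inr x, ch⟩, true =>
        match σ.toFun x with
        | some s =>
            match PFunctor.M.dest s with
            | ⟨l, ch'⟩ => ⟨l, fun i => (ch' i, false)⟩
        | none => ⟨Sum.inr x, fun i => (ch i, true)⟩
    | ⟨Sum.inr x, ch⟩, false => ⟨Sum.inr x, fun i => (ch i, false)⟩

/-- Application `tσ` of a substitution to a term. -/
def Term.subst {S : Sig} (t : Term S) (σ : Subst S) : Term S :=
  PFunctor.M.corec (substStep S σ) (t, true)

/-- Atoms: a predicate symbol applied to terms (a possibly infinite tree whose
root is labelled by a predicate symbol). -/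
structure Atom (S : Sig) where
  pred : S.Pred
  args : Fin (S.par pred) → Term S

/-- The variable `x` occurs in the atom `A`. -/
def Atom.Occurs {S : Sig} (x : ℕ) (A : Atom S) : Prop := ∃ i, Term.Occurs S x (A.args i)

/-- Ground atoms. The set of all ground atoms is the complete Herbrand base. -/
def Atom.Ground {S : Sig} (A : Atom S) : Prop := ∀ i, Term.Ground S (A.args i)

/-- Finite (syntactic) atoms. -/
def Atom.IsFinite {S : Sig} (A : Atom S) : Prop := ∀ i, Term.IsFinite S (A.args i)

/-- Application of a substitution to an atom. -/
def Atom.subst {S : Sig} (A : Atom S) (σ : Subst S) : Atom S :=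
  ⟨A.pred, fun i => Term.subst (A.args i) σ⟩

/-- A (definite) clause `head :- body`, made of finite atoms. -/
structure Clause (S : Sig) where
  head : Atom S
  body : List (Atom S)
  finHead : head.IsFinite
  finBody : ∀ B ∈ body, B.IsFinite

/-- Variables occurring in a clause. -/
def clauseVars {S : Sig} (C : Clause S) : Set ℕ :=
  {x | Atom.Occurs x C.head ∨ ∃ B ∈ C.body, Atom.Occurs x B}

/-- `Ground P` : the ground instances of clauses of `P`, viewed as inference rules
(pairs premises/conclusion) on the complete Herbrand base. -/
def GroundInst {S : Sig} (P : Set (Clause S)) : Set (Atom S × List (Atom S)) :=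
  {r | ∃ C ∈ P, ∃ σ : Subst S, σ.Ground ∧
        r.1 = C.head.subst σ ∧ r.2 = C.body.map (fun B => B.subst σ) ∧
        r.1.Ground ∧ ∀ B ∈ r.2, B.Ground}

/-- The (one step) inference operator `T_P` associated to a program. -/
def TP {S : Sig} (P : Set (Clause S)) (I : Set (Atom S)) : Set (Atom S) :=
  {A | ∃ r ∈ GroundInst P, r.1 = A ∧ ∀ B ∈ r.2, B ∈ I}

/-- `I` is a model of `P`. -/
def IsModel {S : Sig} (P : Set (Clause S)) (I : Set (Atom S)) : Prop := TP P I ⊆ I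

/-- `I` is a comodel of `P`. -/
def IsComodel {S : Sig} (P : Set (Clause S)) (I : Set (Atom S)) : Prop := I ⊆ TP P I

/-- `Ind P` : the inductive declarative semantics, i.e. the least model of `P`. -/
def Ind {S : Sig} (P : Set (Clause S)) : Set (Atom S) := ⋂₀ {I | IsModel P I}

/-- `FlexCo (P,coP)` : the declarative semantics of a logic program with coclauses,
i.e. the largest comodel of `P` included in `Ind (P ∪ coP)` (union of all such comodels). -/
def FlexCo {S : Sig} (P coP : Set (Clause S)) : Set (Atom S) :=
  ⋃₀ {I | IsComodel P I ∧ I ⊆ Ind (P ∪ coP)}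

/-- `FlexReg (P,coP)` : the regular declarative semantics, i.e. the union of all
finite comodels of `P` included in `Ind (P ∪ coP)`. -/
def FlexReg {S : Sig} (P coP : Set (Clause S)) : Set (Atom S) :=
  ⋃₀ {I | I.Finite ∧ IsComodel P I ∧ I ⊆ Ind (P ∪ coP)}

/-- An equation `s ≐ t` between terms. -/
abbrev Eqn (S : Sig) := Term S × Term S

/-- Variables occurring in a set of equations. -/
def eqnVars {S : Sig} (E : Set (Eqn S)) : Set ℕ :=
  {x | ∃ e ∈ E, Term.Occurs S x e.1 ∨ Term.Occurs S x e.2}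

/-- `E` is a finite set of equations between finite (syntactic) terms. -/
def EqnSetFin {S : Sig} (E : Set (Eqn S)) : Prop :=
  E.Finite ∧ ∀ e ∈ E, Term.IsFinite S e.1 ∧ Term.IsFinite S e.2

/-- `sol E` : the set of solutions of `E`, i.e. ground substitutions defined on all
variables of `E` that unify all the equations in `E`. -/
def sol {S : Sig} (E : Set (Eqn S)) : Set (Subst S) :=
  {σ | σ.Ground ∧ eqnVars E ⊆ σ.dom ∧ ∀ e ∈ E, e.1.subst σ = e.2.subst σ}

/-- `E` is solvable. -/
def Solvable {S : Sig} (E : Set (Eqn S)) : Prop := (sol E).Nonempty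

/-- `eqs(A,B)` : the equations between the corresponding arguments of two atoms
with the same predicate symbol. -/
def atomEqs {S : Sig} (A B : Atom S) : Set (Eqn S) :=
  {e | ∃ (h : A.pred = B.pred) (i : Fin (S.par A.pred)),
        e = (A.args i, B.args (Fin.cast (congrArg S.par h) i))}

/-- Variables occurring in a set of atoms. -/
def atomsVars {S : Sig} (H : Set (Atom S)) : Set ℕ := {x | ∃ A ∈ H, Atom.Occurs x A}

/-- Variables occurring in a sequence of atoms (a goal). -/
def goalVars {S : Sig} (G : List (Atom S)) : Set ℕ := {x | ∃ A ∈ G, Atom.Occurs x A}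

/-- `ρ` is a renaming of the variables of clause `C` to fresh variables avoiding `avoid`:
it maps (injectively) every variable of `C` to a variable not in `avoid`. -/
def FreshRenamingFor {S : Sig} (ρ : Subst S) (C : Clause S) (avoid : Set ℕ) : Prop :=
  (∀ x t, ρ.toFun x = some t → ∃ y, t = Term.var S y ∧ y ∉ avoid) ∧
  clauseVars C ⊆ ρ.dom ∧
  (∀ x y, ρ.toFun x = ρ.toFun y → (ρ.toFun x).isSome → x = y)

/-- The big-step operational semantics judgment `P;coP ⊢ H : ⟨G | E⟩ ⇒ E'` of
flexible coSLD resolution, inductively defined by the rules (empty), (co-hyp), (step). -/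
inductive OpSem (S : Sig) :
    Set (Clause S) → Set (Clause S) → Set (Atom S) → List (Atom S) →
      Set (Eqn S) → Set (Eqn S) → Prop
  | empty (P coP : Set (Clause S)) (H : Set (Atom S)) (E : Set (Eqn S)) :
      OpSem S P coP H [] E E
  | cohyp {P coP : Set (Clause S)} {H : Set (Atom S)} {G1 G2 : List (Atom S)}
      {A B : Atom S} {E1 E2 E3 : Set (Eqn S)} :
      coP ≠ ∅ → B ∈ H → A.pred = B.pred →
      Solvable (E1 ∪ atomEqs A B) →
      OpSem S (P ∪ coP) ∅ ∅ [A] (E1 ∪ atomEqs A B) E2 →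
      OpSem S P coP H (G1 ++ G2) E2 E3 →
      OpSem S P coP H (G1 ++ A :: G2) E1 E3
  | step {P coP : Set (Clause S)} {H : Set (Atom S)} {G1 G2 : List (Atom S)}
      {A : Atom S} {E1 E2 E3 : Set (Eqn S)} (C : Clause S) (ρ : Subst S) :
      C ∈ P →
      FreshRenamingFor ρ C (eqnVars E1 ∪ atomsVars H ∪ goalVars (G1 ++ A :: G2)) →
      A.pred = C.head.pred →
      Solvable (E1 ∪ atomEqs A (C.head.subst ρ)) →
      OpSem S P coP (H ∪ {A}) (C.body.map (fun B => B.subst ρ))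
        (E1 ∪ atomEqs A (C.head.subst ρ)) E2 →
      OpSem S P coP H (G1 ++ G2) E2 E3 →
      OpSem S P coP H (G1 ++ A :: G2) E1 E3

/-- `Ans(G,E,I)` : the set of answers to the goal `⟨G | E⟩` correct in the
interpretation `I`. -/
def Ans {S : Sig} (G : List (Atom S)) (E : Set (Eqn S)) (I : Set (Atom S)) :
    Set (Subst S) :=
  {σ | σ ∈ sol E ∧ goalVars G ⊆ σ.dom ∧ ∀ A ∈ G, A.subst σ ∈ I}

/-- The inductive interpretation of the inference system `Loop(P,coP)`, whose judgments
`H ⊢ A` pair a ground atom with a set of ground atoms (circular hypotheses);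
rules: (hp) `H ⊢ A` if `A ∈ H` and `A ∈ Ind (P ∪ coP)`;
(rule) from `H∪{A} ⊢ B` for every premise `B` of a ground instance of a clause of `P`
with conclusion `A`, infer `H ⊢ A`. -/
inductive LoopInd {S : Sig} (P coP : Set (Clause S)) : Set (Atom S) → Atom S → Prop
  | hp {H : Set (Atom S)} {A : Atom S} :
      A ∈ H → A ∈ Ind (P ∪ coP) → LoopInd P coP H A
  | rule {H : Set (Atom S)} {A : Atom S} (r : Atom S × List (Atom S)) :
      r ∈ GroundInst P → r.1 = A →
      (∀ B ∈ r.2, LoopInd P coP (H ∪ {A}) B) →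
      LoopInd P coP H A


/-! ### The incompleteness example:
signature with one constant `z` (encoded `false`), one unary function symbol `s`
(encoded `true`) and one unary predicate symbol `p`;
program `P = { p(X) :- p(s(X)) }` with the single cofact `coP = { p(X) }`. -/

/-- The signature of the example. -/
def exSig : Sig where
  Func := Bool
  far := fun b => cond b 1 0
  Pred := Unit
  par := fun _ => 1

/-- The constant `z`. -/
def zT : Term exSig := PFunctor.M.mk ⟨Sum.inl false, fun i => i.elim0⟩

/-- `s(t)`. -/
def sApp (t : Term exSig) : Term exSig := PFunctor.M.mk ⟨Sum.inl true, fun _ => t⟩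

/-- The finite ground terms `sⁿ(z)`. -/
def sIter : ℕ → Term exSig
  | 0 => zT
  | n + 1 => sApp (sIter n)

/-- The unique infinite ground term `s^ω = s(s(s(...)))`. -/
def sOmega : Term exSig :=
  PFunctor.M.corec (fun _ : Unit => ⟨Sum.inl true, fun _ => ()⟩) ()

/-- The atom `p(t)`. -/
def pAtom (t : Term exSig) : Atom exSig := ⟨(), fun _ => t⟩

lemma var_isFinite (x : ℕ) : Term.IsFinite exSig (Term.var exSig x) := by
  constructor
  intro i
  exact i.elim0

lemma sApp_isFinite {t : Term exSig} (ht : Term.IsFinite exSig t) :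
    Term.IsFinite exSig (sApp t) := by
  constructor
  intro i
  exact ht

/-- The clause `p(X) :- p(s(X))`. -/
def exClause : Clause exSig where
  head := pAtom (Term.var exSig 0)
  body := [pAtom (sApp (Term.var exSig 0))]
  finHead := fun _ => var_isFinite 0
  finBody := by
    intro B hB
    simp only [List.mem_singleton] at hB
    subst hB
    intro i
    exact sApp_isFinite (var_isFinite 0)

/-- The cofact `p(X)`. -/
def exCofact : Clause exSig where
  head := pAtom (Term.var exSig 0)
  body := []
  finHead := fun _ => var_isFinite 0
  finBody := by intro B hB; cases hB

/-- The program of the example. -/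
def exP : Set (Clause exSig) := {exClause}

/-- The coclauses of the example. -/
def excoP : Set (Clause exSig) := {exCofact}
/-! ### Auxiliary lemmas -/

lemma dest_zT : PFunctor.M.dest zT = ⟨Sum.inl false, fun i => i.elim0⟩ := rfl

lemma dest_sApp (t : Term exSig) :
    PFunctor.M.dest (sApp t) = ⟨Sum.inl true, fun _ => t⟩ := rfl

lemma dest_var (x : ℕ) :
    PFunctor.M.dest (Term.var exSig x) = ⟨Sum.inr x, fun i => i.elim0⟩ := rfl

lemma dest_sOmega : PFunctor.M.dest sOmega = ⟨Sum.inl true, fun _ => sOmega⟩ := by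
  exact (PFunctor.M.dest_corec _ _).trans rfl

lemma sApp_sOmega : sApp sOmega = sOmega := by
  conv_rhs => rw [← PFunctor.M.mk_dest sOmega, dest_sOmega]
  rfl

lemma sApp_inj {a b : Term exSig} (h : sApp a = sApp b) : a = b := by
  have h2 := congrArg PFunctor.M.dest h
  rw [dest_sApp, dest_sApp] at h2
  simpa using congrFun (eq_of_heq (Sigma.mk.inj_iff.mp h2).2) ⟨0, Nat.one_pos⟩
lemma zT_ne_sApp (t : Term exSig) : zT ≠ sApp t := by
  intro h
  have := congrArg (fun u => (PFunctor.M.dest u).1) h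
  simp only [dest_zT, dest_sApp] at this
  exact Bool.noConfusion (Sum.inl.inj this)

lemma zT_ne_sOmega : zT ≠ sOmega := by
  intro h
  have := congrArg (fun u => (PFunctor.M.dest u).1) h
  simp only [dest_zT, dest_sOmega] at this
  exact Bool.noConfusion (Sum.inl.inj this)

lemma sIter_inj : Function.Injective sIter := by
  intro a
  induction a with
  | zero =>
    intro b h
    cases b with
    | zero => rfl
    | succ b => exact absurd h (zT_ne_sApp _)
  | succ a ih =>
    intro b h
    cases b with
    | zero => exact absurd h.symm (zT_ne_sApp _)
    | succ b => exact congrArg Nat.succ (ih (sApp_inj h))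

lemma sIter_ne_sOmega (n : ℕ) : sIter n ≠ sOmega := by
  induction n with
  | zero => exact zT_ne_sOmega
  | succ n ih =>
    intro h
    rw [← sApp_sOmega] at h
    exact ih (sApp_inj h)

lemma ground_zT : Term.Ground exSig zT := by
  intro x h
  cases h with
  | root t h => simp [dest_zT] at h
  | child t i h => exact i.elim0

lemma not_ground_var (x : ℕ) : ¬ Term.Ground exSig (Term.var exSig x) := by
  intro h
  exact h x (Term.Occurs.root _ rfl)

lemma ground_sApp {t : Term exSig} (h : Term.Ground exSig t) :
    Term.Ground exSig (sApp t) := by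
  intro x hx
  cases hx with
  | root t' h' => simp [dest_sApp] at h'
  | child t' i h' => exact h x h'

lemma ground_sApp_inv {t : Term exSig} (h : Term.Ground exSig (sApp t)) :
    Term.Ground exSig t := by
  intro x hx
  exact h x (Term.Occurs.child (sApp t) ⟨0, Nat.one_pos⟩ hx)

lemma ground_sIter (n : ℕ) : Term.Ground exSig (sIter n) := by
  induction n with
  | zero => exact ground_zT
  | succ n ih => exact ground_sApp ih

lemma ground_sOmega : Term.Ground exSig sOmega := by
  intro x h
  have key : ∀ t, Term.Occurs exSig x t → t ≠ sOmega := by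
    intro t ht
    induction ht with
    | root t h =>
      rintro rfl
      rw [dest_sOmega] at h
      simp at h
    | child t i h ih =>
      rintro rfl
      revert i
      rw [dest_sOmega]
      intro i h ih
      exact ih rfl
  exact key _ h rfl
/-- Step down one `s` (identity on `z` and variables). -/
def tstep (t : Term exSig) : Term exSig :=
  match PFunctor.M.dest t with
  | ⟨Sum.inl true, ch⟩ => ch ⟨0, Nat.one_pos⟩
  | _ => t

lemma tstep_of_dest {t : Term exSig} {ch} (h : PFunctor.M.dest t = ⟨Sum.inl true, ch⟩) :
    tstep t = ch ⟨0, Nat.one_pos⟩ := by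
  unfold tstep
  rw [h]

lemma fin1_eq (i : (TermP exSig).B (Sum.inl true)) : i = ⟨0, Nat.one_pos⟩ := by
  rcases i with ⟨i, hi⟩
  have hi' : i < 1 := hi
  simp [Nat.lt_one_iff.mp hi']
  rfl

lemma eq_mk_of_dest {t : Term exSig} {l ch} (h : PFunctor.M.dest t = ⟨l, ch⟩) :
    t = PFunctor.M.mk ⟨l, ch⟩ := by
  rw [← PFunctor.M.mk_dest t, h]

lemma eq_sApp_of_dest {t : Term exSig} {ch} (h : PFunctor.M.dest t = ⟨Sum.inl true, ch⟩) :
    t = sApp (tstep t) := by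
  have ht := eq_mk_of_dest h
  have hch : ch = fun _ => tstep t := by
    funext i
    rw [fin1_eq i, tstep_of_dest h]
  rw [ht, hch]
  rfl

lemma eq_zT_of_dest {t : Term exSig} {ch} (h : PFunctor.M.dest t = ⟨Sum.inl false, ch⟩) :
    t = zT := by
  have ht := eq_mk_of_dest h
  have hch : ch = fun i => i.elim0 := by
    funext i
    exact i.elim0
  rw [ht, hch]
  rfl

lemma ground_tstep {t : Term exSig} (hg : Term.Ground exSig t) :
    Term.Ground exSig (tstep t) := by
  rcases hd : PFunctor.M.dest t with ⟨l, ch⟩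
  rcases l with f | x
  · cases f
    · have := eq_zT_of_dest hd
      subst this
      exact hg
    · have h2 := eq_sApp_of_dest hd
      rw [h2] at hg
      exact ground_sApp_inv hg
  · exact absurd (Term.Occurs.root t (by rw [hd])) (hg x)

lemma ground_char {t : Term exSig} (hg : Term.Ground exSig t) :
    (∃ n, t = sIter n) ∨ t = sOmega := by
  by_cases hc : ∀ n, (PFunctor.M.dest (tstep^[n] t)).1 = Sum.inl true
  · right
    refine PFunctor.M.bisim
      (fun a b => b = sOmega ∧ ∀ n, (PFunctor.M.dest (tstep^[n] a)).1 = Sum.inl true)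
      ?_ t sOmega ⟨rfl, hc⟩
    rintro a b ⟨rfl, ha⟩
    rcases hd : PFunctor.M.dest a with ⟨l, ch⟩
    have h0 := ha 0
    simp only [Function.iterate_zero, id] at h0
    rw [hd] at h0
    subst h0
    refine ⟨_, ch, fun _ => sOmega, rfl, dest_sOmega, ?_⟩
    intro i
    refine ⟨rfl, fun n => ?_⟩
    rw [fin1_eq i, ← tstep_of_dest hd]
    exact ha (n + 1)
  · left
    simp only [not_forall] at hc
    classical
    have hmin := Nat.find_spec hc
    set n := Nat.find hc with hn
    have hlt : ∀ m < n, (PFunctor.M.dest (tstep^[m] t)).1 = Sum.inl true := by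
      intro m hm
      by_contra h
      exact Nat.find_min hc hm h
    refine ⟨n, ?_⟩
    clear_value n
    clear hn hc
    induction n generalizing t with
    | zero =>
      simp only [Function.iterate_zero, id] at hmin
      rcases hd : PFunctor.M.dest t with ⟨l, ch⟩
      rcases l with f | x
      · cases f
        · exact eq_zT_of_dest hd
        · exact absurd (by rw [hd]; rfl : (PFunctor.M.dest t).1 = Sum.inl true) hmin
      · exact absurd (Term.Occurs.root t (by rw [hd])) (hg x)
    | succ n ih =>
      have h0 : (PFunctor.M.dest t).1 = Sum.inl true := hlt 0 (Nat.succ_pos n)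
      rcases hd : PFunctor.M.dest t with ⟨l, ch⟩
      rw [hd] at h0
      subst h0
      have hts : tstep^[n + 1] t = tstep^[n] (tstep t) := Function.iterate_succ_apply .. 
      rw [hts] at hmin
      have hrec : tstep t = sIter n := by
        refine ih (ground_tstep hg) hmin ?_
        intro m hm
        rw [← Function.iterate_succ_apply]
        exact hlt (m + 1) (Nat.succ_lt_succ hm)
      rw [eq_sApp_of_dest hd, hrec]
      rfl
lemma subst_corec_false (σ : Subst exSig) (u : Term exSig) :
    PFunctor.M.corec (substStep exSig σ) (u, false) = u := by
  refine PFunctor.M.bisim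
    (fun a b => a = PFunctor.M.corec (substStep exSig σ) (b, false)) ?_ _ _ rfl
  rintro a b rfl
  rcases hd : PFunctor.M.dest b with ⟨l, ch⟩
  have hb := eq_mk_of_dest hd
  refine ⟨l, fun i => PFunctor.M.corec (substStep exSig σ) (ch i, false), ch, ?_, rfl, fun i => rfl⟩
  rw [hb, PFunctor.M.dest_corec]
  rcases l with f | x <;> rfl

lemma subst_sApp (σ : Subst exSig) (u : Term exSig) :
    (sApp u).subst σ = sApp (u.subst σ) := by
  have h : PFunctor.M.dest ((sApp u).subst σ) = ⟨Sum.inl true, fun _ => u.subst σ⟩ := by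
    exact (PFunctor.M.dest_corec _ _).trans rfl
  rw [← PFunctor.M.mk_dest ((sApp u).subst σ), h]
  rfl

lemma subst_var_some (σ : Subst exSig) {x : ℕ} {u : Term exSig}
    (h : σ.toFun x = some u) : (Term.var exSig x).subst σ = u := by
  have h1 : PFunctor.M.dest ((Term.var exSig x).subst σ) = PFunctor.M.dest u := by
    rcases hu : PFunctor.M.dest u with ⟨l, ch⟩
    refine (PFunctor.M.dest_corec (substStep exSig σ) (Term.var exSig x, true)).trans ?_
    ·     show (TermP exSig).map (PFunctor.M.corec (substStep exSig σ))
              (substStep exSig σ (Term.var exSig x, true)) = (⟨l, ch⟩ : (TermP exSig).Obj (TermP exSig).M)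
          simp only [substStep, dest_var, h, hu]
          exact congrArg (@Sigma.mk (TermP exSig).A (fun a => (TermP exSig).B a → (TermP exSig).M) l) (funext fun i => subst_corec_false σ (ch i))
  rw [← PFunctor.M.mk_dest ((Term.var exSig x).subst σ), h1]
  exact PFunctor.M.mk_dest u

lemma subst_var_none (σ : Subst exSig) {x : ℕ}
    (h : σ.toFun x = none) : (Term.var exSig x).subst σ = Term.var exSig x := by
  have h1 : PFunctor.M.dest ((Term.var exSig x).subst σ) =
      ⟨Sum.inr x, fun i => i.elim0⟩ := by
    refine (PFunctor.M.dest_corec (substStep exSig σ) (Term.var exSig x, true)).trans ?_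
    ·     show (TermP exSig).map (PFunctor.M.corec (substStep exSig σ))
              (substStep exSig σ (Term.var exSig x, true)) =
              (⟨Sum.inr x, fun i => i.elim0⟩ : (TermP exSig).Obj (TermP exSig).M)
          simp only [substStep, dest_var, h]
          exact congrArg (@Sigma.mk (TermP exSig).A (fun a => (TermP exSig).B a → (TermP exSig).M) (Sum.inr x)) (funext fun i => i.elim0)
  rw [← PFunctor.M.mk_dest ((Term.var exSig x).subst σ), h1]
  rfl
/-- The substitution mapping variable `0` to `t`. -/
def constSubst (t : Term exSig) : Subst exSig where
  toFun := fun x => if x = 0 then some t else none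
  finDom := Set.Finite.subset (Set.finite_singleton 0) (by
    intro x hx
    simp only [Set.mem_setOf_eq] at hx
    by_contra h
    simp only [Set.mem_singleton_iff] at h
    simp [h] at hx)

lemma constSubst_zero (t : Term exSig) : (constSubst t).toFun 0 = some t := rfl

lemma constSubst_ground {t : Term exSig} (h : Term.Ground exSig t) :
    (constSubst t).Ground := by
  intro x u hu
  simp only [constSubst] at hu
  by_cases hx : x = 0
  · rw [if_pos hx] at hu
    cases hu
    exact h
  · rw [if_neg hx] at hu
    cases hu

lemma pAtom_subst (σ : Subst exSig) (t : Term exSig) :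
    (pAtom t).subst σ = pAtom (t.subst σ) := rfl

lemma pAtom_inj {a b : Term exSig} (h : pAtom a = pAtom b) : a = b := by
  have h2 : (pAtom a).args ⟨0, Nat.one_pos⟩ = (pAtom b).args ⟨0, Nat.one_pos⟩ := by rw [h]
  exact h2

lemma atom_eta (A : Atom exSig) : A = pAtom (A.args ⟨0, Nat.one_pos⟩) := by
  rcases A with ⟨p, args⟩
  obtain ⟨⟩ := p
  unfold pAtom
  congr 1
  funext i
  congr 1
  exact fin1_eq i

lemma pAtom_ground {t : Term exSig} (h : Term.Ground exSig t) : (pAtom t).Ground :=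
  fun _ => h

lemma pAtom_ground_inv {t : Term exSig} (h : (pAtom t).Ground) : Term.Ground exSig t :=
  h ⟨0, Nat.one_pos⟩

/-- The complete Herbrand base of the example. -/
def coHB : Set (Atom exSig) := {A | ∃ t, Term.Ground exSig t ∧ A = pAtom t}

lemma mem_groundInst_exP {r : Atom exSig × List (Atom exSig)} :
    r ∈ GroundInst exP ↔ ∃ t, Term.Ground exSig t ∧ r = (pAtom t, [pAtom (sApp t)]) := by
  constructor
  · rintro ⟨C, hC, σ, hσg, h1, h2, hg1, hg2⟩
    rw [exP, Set.mem_singleton_iff] at hC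
    subst hC
    cases hs : σ.toFun 0 with
    | none =>
      exfalso
      have h1' : r.1 = pAtom (Term.var exSig 0) := by
        rw [h1]
        show pAtom ((Term.var exSig 0).subst σ) = _
        rw [subst_var_none σ hs]
      rw [h1'] at hg1
      exact not_ground_var 0 (pAtom_ground_inv hg1)
    | some u =>
      refine ⟨u, hσg 0 u hs, ?_⟩
      have e1 : r.1 = pAtom u := by
        rw [h1]
        show pAtom ((Term.var exSig 0).subst σ) = _
        rw [subst_var_some σ hs]
      have e2 : r.2 = [pAtom (sApp u)] := by
        rw [h2]
        show [pAtom ((sApp (Term.var exSig 0)).subst σ)] = _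
        rw [subst_sApp, subst_var_some σ hs]
      rw [Prod.ext_iff]
      exact ⟨e1, e2⟩
  · rintro ⟨t, ht, rfl⟩
    refine ⟨exClause, rfl, constSubst t, constSubst_ground ht, ?_, ?_, ?_, ?_⟩
    · show pAtom t = pAtom ((Term.var exSig 0).subst (constSubst t))
      rw [subst_var_some _ (constSubst_zero t)]
    · show [pAtom (sApp t)] = [pAtom ((sApp (Term.var exSig 0)).subst (constSubst t))]
      rw [subst_sApp, subst_var_some _ (constSubst_zero t)]
    · exact pAtom_ground ht
    · intro B hB
      simp only [List.mem_singleton] at hB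
      subst hB
      exact pAtom_ground (ground_sApp ht)

lemma cofact_groundInst {t : Term exSig} (ht : Term.Ground exSig t) :
    (pAtom t, ([] : List (Atom exSig))) ∈ GroundInst (exP ∪ excoP) := by
  refine ⟨exCofact, Or.inr rfl, constSubst t, constSubst_ground ht, ?_, rfl, ?_, ?_⟩
  · show pAtom t = pAtom ((Term.var exSig 0).subst (constSubst t))
    rw [subst_var_some _ (constSubst_zero t)]
  · exact pAtom_ground ht
  · intro B hB
    cases hB
lemma TP_subset_coHB (P : Set (Clause exSig)) (I : Set (Atom exSig)) :
    TP P I ⊆ coHB := by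
  rintro A ⟨r, ⟨C, hC, σ, hσg, h1, h2, hg1, hg2⟩, hrA, hb⟩
  subst hrA
  exact ⟨r.1.args ⟨0, Nat.one_pos⟩, pAtom_ground_inv (atom_eta r.1 ▸ hg1), atom_eta r.1⟩

lemma Ind_union_eq : Ind (exP ∪ excoP) = coHB := by
  apply Set.Subset.antisymm
  · exact Set.sInter_subset_of_mem (TP_subset_coHB _ coHB)
  · rintro A ⟨t, ht, rfl⟩
    intro I hI
    exact hI ⟨(pAtom t, []), cofact_groundInst ht, rfl, by intro B hB; cases hB⟩

lemma mem_TP_exP {t : Term exSig} {I : Set (Atom exSig)} (ht : Term.Ground exSig t)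
    (hb : pAtom (sApp t) ∈ I) : pAtom t ∈ TP exP I := by
  refine ⟨(pAtom t, [pAtom (sApp t)]), mem_groundInst_exP.mpr ⟨t, ht, rfl⟩, rfl, ?_⟩
  intro B hB
  simp only [List.mem_singleton] at hB
  subst hB
  exact hb

lemma comodel_coHB : IsComodel exP coHB := by
  rintro A ⟨t, ht, rfl⟩
  exact mem_TP_exP ht ⟨sApp t, ground_sApp ht, rfl⟩

lemma FlexCo_eq : FlexCo exP excoP = coHB := by
  apply Set.Subset.antisymm
  · rintro A ⟨I, ⟨hco, hsub⟩, hA⟩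
    rw [Ind_union_eq] at hsub
    exact hsub hA
  · intro A hA
    exact ⟨coHB, ⟨comodel_coHB, by rw [Ind_union_eq]⟩, hA⟩

lemma FlexReg_eq : FlexReg exP excoP = {pAtom sOmega} := by
  apply Set.Subset.antisymm
  · rintro A ⟨I, ⟨hfin, hco, hsub⟩, hA⟩
    rw [Ind_union_eq] at hsub
    -- the chain step
    have hstep : ∀ t : Term exSig, pAtom t ∈ I → pAtom (sApp t) ∈ I := by
      intro t htI
      obtain ⟨r, hr, hrA, hb⟩ := hco htI
      obtain ⟨t', ht', hr'⟩ := mem_groundInst_exP.mp hr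
      subst hr'
      have : t' = t := pAtom_inj hrA
      subst this
      exact hb _ (by simp)
    have hIter : ∀ n, pAtom (sIter n) ∈ I → False := by
      intro n hn
      have hall : ∀ k, pAtom (sIter (n + k)) ∈ I := by
        intro k
        induction k with
        | zero => exact hn
        | succ k ih => exact hstep _ ih
      refine hfin.not_infinite (Set.infinite_of_injective_forall_mem
        (f := fun k : ℕ => pAtom (sIter (n + k))) ?_ hall)
      intro a b hab
      have := sIter_inj (pAtom_inj hab)
      omega
    obtain ⟨t, ht, rfl⟩ := hsub hA
    rcases ground_char ht with ⟨n, rfl⟩ | rfl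
    · exact absurd hA (fun h => hIter n h)
    · rfl
  · intro A hA
    rw [Set.mem_singleton_iff] at hA
    subst hA
    refine ⟨{pAtom sOmega}, ⟨Set.finite_singleton _, ?_, ?_⟩, rfl⟩
    · intro B hB
      rw [Set.mem_singleton_iff] at hB
      subst hB
      have := mem_TP_exP (I := {pAtom sOmega}) ground_sOmega (by rw [sApp_sOmega]; rfl)
      exact this
    · rw [Ind_union_eq]
      rintro B hB
      rw [Set.mem_singleton_iff] at hB
      subst hB
      exact ⟨sOmega, ground_sOmega, rfl⟩
/-- Strictness of the inclusion of the regular declarative semantics in the declarative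
semantics: the ground terms of the example signature are exactly the `sⁿ(z)` and `s^ω`;
`FlexCo(P,coP)` is the whole complete Herbrand base `{p(t) | t ground}`, whereas
`FlexReg(P,coP) = {p(s^ω)}`, a proper subset. -/
theorem regular_strictly_below_declarative :
    (∀ t : Term exSig, Term.Ground exSig t ↔ ((∃ n, t = sIter n) ∨ t = sOmega)) ∧
    FlexCo exP excoP = {A | ∃ t : Term exSig, Term.Ground exSig t ∧ A = pAtom t} ∧
    FlexReg exP excoP = {pAtom sOmega} ∧
    FlexReg exP excoP ⊂ FlexCo exP excoP := by
  refine ⟨?_, ?_, FlexReg_eq, ?_⟩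
  · intro t
    constructor
    · exact ground_char
    · rintro (⟨n, rfl⟩ | rfl)
      · exact ground_sIter n
      · exact ground_sOmega
  · rw [FlexCo_eq]; rfl
  · rw [FlexCo_eq, FlexReg_eq]
    constructor
    · rintro A hA
      rw [Set.mem_singleton_iff] at hA
      subst hA
      exact ⟨sOmega, ground_sOmega, rfl⟩
    · intro h
      have hz : pAtom zT ∈ coHB := ⟨zT, ground_zT, rfl⟩
      have := h hz
      rw [Set.mem_singleton_iff] at this
      exact zT_ne_sOmega (pAtom_inj this)

end FlexLP
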